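/- With α = 1.55, for all real a, b, r ≥ 0 with a ≤ b ≤ r, a + b + r ≤ 1, and b ≥ 0.47, we have 2a^α + 2b^α + 0.92·r^α ≤ 1. -/

import Mathlib

private lemma rpow_le_of_pow_le {x c : ℝ} (hx : 0 ≤ x) (hc : 0 ≤ c)
    (h : x ^ (31 : ℕ) ≤ c ^ (20 : ℕ)) : x ^ (1.55 : ℝ) ≤ c := by
  have h1 : x ^ (1.55 : ℝ) = ((x ^ (31 : ℕ) : ℝ)) ^ ((1 : ℝ) / 20) := by
    rw [← Real.rpow_natCast x 31, ← Real.rpow_mul hx]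
    norm_num
  have h2 : c = ((c ^ (20 : ℕ) : ℝ)) ^ ((1 : ℝ) / 20) := by
    rw [← Real.rpow_natCast c 20, ← Real.rpow_mul hc]
    norm_num
  calc x ^ (1.55 : ℝ) = ((x ^ (31 : ℕ) : ℝ)) ^ ((1 : ℝ) / 20) := h1
    _ ≤ ((c ^ (20 : ℕ) : ℝ)) ^ ((1 : ℝ) / 20) :=
        Real.rpow_le_rpow (pow_nonneg hx _) h (by norm_num)
    _ = c := h2.symm

private lemma secant_rpow {l u x : ℝ} (hl : 0 ≤ l) (hlx : l ≤ x) (hxu : x ≤ u) (hlu : l < u) :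
    x ^ (1.55 : ℝ) ≤ ((u - x) * l ^ (1.55 : ℝ) + (x - l) * u ^ (1.55 : ℝ)) / (u - l) := by
  have hcv := convexOn_rpow (by norm_num : (1 : ℝ) ≤ 1.55)
  have hu : (0 : ℝ) ≤ u := le_trans hl (hlx.trans hxu)
  have hd : 0 < u - l := by linarith
  have ht : 0 ≤ (u - x) / (u - l) := div_nonneg (by linarith) hd.le
  have hs : 0 ≤ (x - l) / (u - l) := div_nonneg (by linarith) hd.le
  have hts : (u - x) / (u - l) + (x - l) / (u - l) = 1 := by field_simp; ring
  have key := hcv.2 (Set.mem_Ici.2 hl) (Set.mem_Ici.2 hu) ht hs hts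
  have hx' : ((u - x) / (u - l)) • l + ((x - l) / (u - l)) • u = x := by
    simp only [smul_eq_mul]
    field_simp
    ring
  simp only [smul_eq_mul] at key hx'
  rw [hx'] at key
  calc x ^ (1.55 : ℝ)
      ≤ (u - x) / (u - l) * l ^ (1.55 : ℝ) + (x - l) / (u - l) * u ^ (1.55 : ℝ) := key
    _ = ((u - x) * l ^ (1.55 : ℝ) + (x - l) * u ^ (1.55 : ℝ)) / (u - l) := by ring

set_option maxHeartbeats 1000000 in
/-- Claim 3 of the ternary tree analysis (α = 1.55). -/
theorem stmt10 (α : ℝ) (hα : α = 1.55) :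
    ∀ a b r : ℝ, 0 ≤ a → 0 ≤ b → 0 ≤ r → a ≤ b → b ≤ r → a + b + r ≤ 1 → 0.47 ≤ b →
      2 * a ^ α + 2 * b ^ α + 0.92 * r ^ α ≤ 1 := by
  subst hα
  intro a b r ha hb hr hab hbr hsum hb47
  have ha06 : a ≤ 0.06 := by linarith
  have hb05 : b ≤ 0.5 := by linarith
  have hr053 : r ≤ 0.53 := by linarith
  have hr47 : 0.47 ≤ r := by linarith
  -- numeric bounds on endpoint powers
  have e0 : (0 : ℝ) ^ (1.55 : ℝ) = 0 := Real.zero_rpow (by norm_num)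
  have e06 : (0.06 : ℝ) ^ (1.55 : ℝ) ≤ 0.0128 :=
    rpow_le_of_pow_le (by norm_num) (by norm_num) (by norm_num)
  have e47 : (0.47 : ℝ) ^ (1.55 : ℝ) ≤ 0.3103 :=
    rpow_le_of_pow_le (by norm_num) (by norm_num) (by norm_num)
  have e50 : (0.5 : ℝ) ^ (1.55 : ℝ) ≤ 0.3416 :=
    rpow_le_of_pow_le (by norm_num) (by norm_num) (by norm_num)
  have e53 : (0.53 : ℝ) ^ (1.55 : ℝ) ≤ 0.3738 :=
    rpow_le_of_pow_le (by norm_num) (by norm_num) (by norm_num)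
  -- secant bounds, multiplied out
  have sa := (le_div_iff₀ (by norm_num : (0:ℝ) < 0.06 - 0)).mp
    (secant_rpow (le_refl (0:ℝ)) ha ha06 (by norm_num))
  have sb := (le_div_iff₀ (by norm_num : (0:ℝ) < 0.5 - 0.47)).mp
    (secant_rpow (by norm_num : (0:ℝ) ≤ 0.47) hb47 hb05 (by norm_num))
  have sr := (le_div_iff₀ (by norm_num : (0:ℝ) < 0.53 - 0.47)).mp
    (secant_rpow (by norm_num : (0:ℝ) ≤ 0.47) hr47 hr053 (by norm_num))
  rw [e0] at sa
  -- bound the products by constants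
  have t1 : (0.06 - a) * (0 : ℝ) ≤ (0.06 - a) * 0 := le_refl _
  have t2 : (a - 0) * (0.06 : ℝ) ^ (1.55 : ℝ) ≤ (a - 0) * 0.0128 :=
    mul_le_mul_of_nonneg_left e06 (by linarith)
  have t3 : (0.5 - b) * (0.47 : ℝ) ^ (1.55 : ℝ) ≤ (0.5 - b) * 0.3103 :=
    mul_le_mul_of_nonneg_left e47 (by linarith)
  have t4 : (b - 0.47) * (0.5 : ℝ) ^ (1.55 : ℝ) ≤ (b - 0.47) * 0.3416 :=
    mul_le_mul_of_nonneg_left e50 (by linarith)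
  have t5 : (0.53 - r) * (0.47 : ℝ) ^ (1.55 : ℝ) ≤ (0.53 - r) * 0.3103 :=
    mul_le_mul_of_nonneg_left e47 (by linarith)
  have t6 : (r - 0.47) * (0.53 : ℝ) ^ (1.55 : ℝ) ≤ (r - 0.47) * 0.3738 :=
    mul_le_mul_of_nonneg_left e53 (by linarith)
  linarith [sa, sb, sr, t2, t3, t4, t5, t6]
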